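/- Let G be a connected simple graph with n ≥ 3 vertices and minimum degree δ ≥ 2. Then 8 · GA(G) ≤ AZI(G) ≤ ((n−1)⁶/(8(n−2)³)) · GA(G), with equality on the left if and only if G is isomorphic to the cycle Cₙ, and equality on the right if and only if G is isomorphic to the complete graph Kₙ. -/

import Mathlib

open Finset SimpleGraph

variable {V : Type*} [Fintype V] [DecidableEq V]

/-- The sum-connectivity index `X(G) = Σ_{uv ∈ E(G)} 1/√(d_u + d_v)`. -/
noncomputable def sumConnIndex (G : SimpleGraph V) [DecidableRel G.Adj] : ℝ :=
  ∑ e ∈ G.edgeFinset, Sym2.lift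
    ⟨fun u v => 1 / Real.sqrt ((G.degree u : ℝ) + (G.degree v : ℝ)),
     fun u v => by dsimp only; rw [add_comm ((G.degree u : ℝ)) ((G.degree v : ℝ))]⟩ e

/-- The Randić index `R(G) = Σ_{uv ∈ E(G)} 1/√(d_u d_v)`. -/
noncomputable def randicIndex (G : SimpleGraph V) [DecidableRel G.Adj] : ℝ :=
  ∑ e ∈ G.edgeFinset, Sym2.lift
    ⟨fun u v => 1 / Real.sqrt ((G.degree u : ℝ) * (G.degree v : ℝ)),
     fun u v => by dsimp only; rw [mul_comm ((G.degree u : ℝ)) ((G.degree v : ℝ))]⟩ e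

/-- The harmonic index `H(G) = Σ_{uv ∈ E(G)} 2/(d_u + d_v)`. -/
noncomputable def harmonicIndex (G : SimpleGraph V) [DecidableRel G.Adj] : ℝ :=
  ∑ e ∈ G.edgeFinset, Sym2.lift
    ⟨fun u v => 2 / ((G.degree u : ℝ) + (G.degree v : ℝ)),
     fun u v => by dsimp only; rw [add_comm ((G.degree u : ℝ)) ((G.degree v : ℝ))]⟩ e

/-- The atom-bond connectivity index `ABC(G) = Σ_{uv ∈ E(G)} √((d_u + d_v − 2)/(d_u d_v))`. -/
noncomputable def abcIndex (G : SimpleGraph V) [DecidableRel G.Adj] : ℝ :=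
  ∑ e ∈ G.edgeFinset, Sym2.lift
    ⟨fun u v => Real.sqrt (((G.degree u : ℝ) + (G.degree v : ℝ) - 2) /
        ((G.degree u : ℝ) * (G.degree v : ℝ))),
     fun u v => by dsimp only; rw [add_comm ((G.degree u : ℝ)) ((G.degree v : ℝ)),
        mul_comm ((G.degree u : ℝ)) ((G.degree v : ℝ))]⟩ e

/-- The first geometric-arithmetic index `GA(G) = Σ_{uv ∈ E(G)} 2√(d_u d_v)/(d_u + d_v)`. -/
noncomputable def geoArithIndex (G : SimpleGraph V) [DecidableRel G.Adj] : ℝ :=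
  ∑ e ∈ G.edgeFinset, Sym2.lift
    ⟨fun u v => 2 * Real.sqrt ((G.degree u : ℝ) * (G.degree v : ℝ)) /
        ((G.degree u : ℝ) + (G.degree v : ℝ)),
     fun u v => by dsimp only; rw [mul_comm ((G.degree u : ℝ)) ((G.degree v : ℝ)),
        add_comm ((G.degree u : ℝ)) ((G.degree v : ℝ))]⟩ e

/-- The augmented Zagreb index `AZI(G) = Σ_{uv ∈ E(G)} (d_u d_v/(d_u + d_v − 2))³`. -/
noncomputable def augZagrebIndex (G : SimpleGraph V) [DecidableRel G.Adj] : ℝ :=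
  ∑ e ∈ G.edgeFinset, Sym2.lift
    ⟨fun u v => ((G.degree u : ℝ) * (G.degree v : ℝ) /
        ((G.degree u : ℝ) + (G.degree v : ℝ) - 2)) ^ 3,
     fun u v => by dsimp only; rw [mul_comm ((G.degree u : ℝ)) ((G.degree v : ℝ)),
        add_comm ((G.degree u : ℝ)) ((G.degree v : ℝ))]⟩ e

/-- The modified second Zagreb index `M₂*(G) = Σ_{uv ∈ E(G)} 1/(d_u d_v)`. -/
noncomputable def modSecondZagrebIndex (G : SimpleGraph V) [DecidableRel G.Adj] : ℝ :=
  ∑ e ∈ G.edgeFinset, Sym2.lift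
    ⟨fun u v => 1 / ((G.degree u : ℝ) * (G.degree v : ℝ)),
     fun u v => by dsimp only; rw [mul_comm ((G.degree u : ℝ)) ((G.degree v : ℝ))]⟩ e


section AuxAnalysis


noncomputable def Ffun (x y : ℝ) : ℝ := x^5*y^5*(x+y)^2/(x+y-2)^6

lemma Ffun_symm (x y : ℝ) : Ffun x y = Ffun y x := by
  unfold Ffun; ring_nf

lemma Ffun_strictMonoOn (y : ℝ) (hy : 2 ≤ y) :
    StrictMonoOn (fun x => Ffun x y) (Set.Ici 2) := by
  have hcont : ContinuousOn (fun x => Ffun x y) (Set.Ici 2) := by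
    apply ContinuousOn.div (by fun_prop) (by fun_prop)
    intro x hx
    have hx2 : (2:ℝ) ≤ x := hx
    have h : 0 < x + y - 2 := by linarith
    positivity
  apply StrictMonoOn.mono (strictMonoOn_of_deriv_pos (convex_Ici 2) hcont ?_) le_rfl
  intro x hx
  rw [interior_Ici] at hx
  have hx2 : (2:ℝ) < x := hx
  have hD : (0:ℝ) < x + y - 2 := by linarith
  have hD6 : ((x+y-2)^6 : ℝ) ≠ 0 := by positivity
  have h1 : HasDerivAt (fun x : ℝ => x^5*y^5*(x+y)^2)
      (5*x^4*y^5*(x+y)^2 + x^5*y^5*(2*(x+y))) x := by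
    have ha : HasDerivAt (fun x : ℝ => x^5*y^5) (5*x^4*y^5) x := by
      simpa using (hasDerivAt_pow 5 x).mul_const (y^5)
    have hb : HasDerivAt (fun x : ℝ => (x+y)^2) (2*(x+y)) x := by
      simpa using ((hasDerivAt_id x).add_const y).fun_pow 2
    simpa [mul_comm, mul_assoc, mul_left_comm] using ha.fun_mul hb
  have h2 : HasDerivAt (fun x : ℝ => (x+y-2)^6) (6*(x+y-2)^5) x := by
    have : HasDerivAt (fun x : ℝ => (x+(y-2))^6) (6*(x+(y-2))^5) x := by
      simpa using ((hasDerivAt_id x).add_const (y-2)).fun_pow 6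
    convert this using 2 <;> ring_nf
  have h3 : HasDerivAt (fun x => Ffun x y)
      (((5*x^4*y^5*(x+y)^2 + x^5*y^5*(2*(x+y))) * (x+y-2)^6
        - x^5*y^5*(x+y)^2 * (6*(x+y-2)^5)) / ((x+y-2)^6)^2) x := by
    simpa [Ffun] using h1.fun_div h2 hD6
  rw [h3.deriv]
  have hbr : 0 < 5*(x+y)^2 - 10*(x+y) - 4*x*(x+y) - 4*x := by nlinarith [sq_nonneg (x-2), sq_nonneg (y-2), mul_nonneg (le_of_lt (by linarith : (0:ℝ) < x - 2)) (by linarith : (0:ℝ) ≤ y - 2)]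
  have hnum : (5*x^4*y^5*(x+y)^2 + x^5*y^5*(2*(x+y))) * (x+y-2)^6
        - x^5*y^5*(x+y)^2 * (6*(x+y-2)^5)
      = x^4*y^5*(x+y)*(x+y-2)^5 * (5*(x+y)^2 - 10*(x+y) - 4*x*(x+y) - 4*x) := by
    ring
  rw [hnum]
  have hx0 : (0:ℝ) < x := by linarith
  have hy0 : (0:ℝ) < y := by linarith
  have hs : (0:ℝ) < x + y := by linarith
  positivity

lemma Ffun_le_Ffun {x y x' y' : ℝ} (hx : 2 ≤ x) (hy : 2 ≤ y)
    (hxx : x ≤ x') (hyy : y ≤ y') : Ffun x y ≤ Ffun x' y' := by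
  have hx' : (2:ℝ) ≤ x' := hx.trans hxx
  have hy' : (2:ℝ) ≤ y' := hy.trans hyy
  have h1 : Ffun x y ≤ Ffun x' y :=
    ((Ffun_strictMonoOn y hy).monotoneOn) hx hx' hxx
  have h2 : Ffun x' y ≤ Ffun x' y' := by
    rw [Ffun_symm x' y, Ffun_symm x' y']
    exact ((Ffun_strictMonoOn x' hx').monotoneOn) hy hy' hyy
  linarith

lemma Ffun_lt_Ffun {x y x' y' : ℝ} (hx : 2 ≤ x) (hy : 2 ≤ y)
    (hxx : x ≤ x') (hyy : y ≤ y') (h : x < x' ∨ y < y') : Ffun x y < Ffun x' y' := by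
  have hx' : (2:ℝ) ≤ x' := hx.trans hxx
  have hy' : (2:ℝ) ≤ y' := hy.trans hyy
  rcases h with h | h
  · have h1 : Ffun x y < Ffun x' y := (Ffun_strictMonoOn y hy) hx hx' h
    have h2 : Ffun x' y ≤ Ffun x' y' := by
      rw [Ffun_symm x' y, Ffun_symm x' y']
      exact ((Ffun_strictMonoOn x' hx').monotoneOn) hy hy' hyy
    linarith
  · have h1 : Ffun x y ≤ Ffun x' y :=
      ((Ffun_strictMonoOn y hy).monotoneOn) hx hx' hxx
    have h2 : Ffun x' y < Ffun x' y' := by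
      rw [Ffun_symm x' y, Ffun_symm x' y']
      exact (Ffun_strictMonoOn x' hx') hy hy' h
    linarith

lemma master (x y k : ℝ) (hx : 2 ≤ x) (hy : 2 ≤ y) (hk : 0 < k) :
    ((x*y/(x+y-2))^3 ≤ k * (2*Real.sqrt (x*y)/(x+y)) ↔ Ffun x y ≤ 4*k^2) ∧
    (k * (2*Real.sqrt (x*y)/(x+y)) ≤ (x*y/(x+y-2))^3 ↔ 4*k^2 ≤ Ffun x y) := by
  have hs : (0:ℝ) < x + y := by linarith
  have hs2 : (0:ℝ) < x + y - 2 := by linarith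
  have hxy : (0:ℝ) < x * y := by nlinarith
  set r := Real.sqrt (x*y) with hrdef
  have hr : 0 < r := Real.sqrt_pos.mpr hxy
  have hr2 : r^2 = x*y := Real.sq_sqrt hxy.le
  have key : ∀ A B : ℝ, 0 < A → 0 < B → ((A ≤ B) ↔ (A^2 ≤ B^2)) := by
    intro A B hA hB
    constructor
    · intro h; nlinarith
    · intro h; nlinarith
  have e1 : (x*y/(x+y-2))^3 = r^6 / (x+y-2)^3 := by
    rw [div_pow, ← hr2]; ring_nf
  have e2 : k * (2*r/(x+y)) = 2*k*r / (x+y) := by ring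
  rw [e1, e2]
  have d1 : r^6 / (x+y-2)^3 ≤ 2*k*r/(x+y) ↔ r^6 * (x+y) ≤ 2*k*r * (x+y-2)^3 :=
    div_le_div_iff₀ (by positivity) hs
  have d1' : 2*k*r/(x+y) ≤ r^6 / (x+y-2)^3 ↔ 2*k*r * (x+y-2)^3 ≤ r^6 * (x+y) :=
    div_le_div_iff₀ hs (by positivity)
  have c1 : r^6 * (x+y) = r * (r^5 * (x+y)) := by ring
  have c2 : 2*k*r * (x+y-2)^3 = r * (2*k*(x+y-2)^3) := by ring
  have d2 : r^6 * (x+y) ≤ 2*k*r * (x+y-2)^3 ↔ r^5*(x+y) ≤ 2*k*(x+y-2)^3 := by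
    rw [c1, c2, mul_le_mul_iff_right₀ hr]
  have d2' : 2*k*r * (x+y-2)^3 ≤ r^6 * (x+y) ↔ 2*k*(x+y-2)^3 ≤ r^5*(x+y) := by
    rw [c1, c2, mul_le_mul_iff_right₀ hr]
  have hA : 0 < r^5*(x+y) := by positivity
  have hB : 0 < 2*k*(x+y-2)^3 := by positivity
  have sq1 : (r^5*(x+y))^2 = Ffun x y * (x+y-2)^6 := by
    have : (r^5*(x+y))^2 = (r^2)^5 * (x+y)^2 := by ring
    rw [this, hr2]
    unfold Ffun
    field_simp
  have sq2 : (2*k*(x+y-2)^3)^2 = (4*k^2) * (x+y-2)^6 := by ring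
  have d3 : r^5*(x+y) ≤ 2*k*(x+y-2)^3 ↔ Ffun x y ≤ 4*k^2 := by
    rw [key _ _ hA hB, sq1, sq2]
    exact mul_le_mul_iff_left₀ (by positivity)
  have d3' : 2*k*(x+y-2)^3 ≤ r^5*(x+y) ↔ 4*k^2 ≤ Ffun x y := by
    rw [key _ _ hB hA, sq1, sq2]
    exact mul_le_mul_iff_left₀ (by positivity)
  exact ⟨d1.trans (d2.trans d3), d1'.trans (d2'.trans d3')⟩

lemma master_eq (x y k : ℝ) (hx : 2 ≤ x) (hy : 2 ≤ y) (hk : 0 < k) :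
    (x*y/(x+y-2))^3 = k * (2*Real.sqrt (x*y)/(x+y)) ↔ Ffun x y = 4*k^2 := by
  obtain ⟨h1, h2⟩ := master x y k hx hy hk
  constructor
  · intro h; exact le_antisymm (h1.mp h.le) (h2.mp h.ge)
  · intro h; exact le_antisymm (h1.mpr h.le) (h2.mpr h.ge)

lemma Ffun_two_two : Ffun 2 2 = 4 * 8^2 := by norm_num [Ffun]

lemma Ffun_MM (M : ℝ) (hM : 2 ≤ M) :
    Ffun M M = 4 * (M^6/(8*(M-1)^3))^2 := by
  have h1 : (0:ℝ) < M - 1 := by linarith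
  unfold Ffun
  have h2 : M + M - 2 = 2*(M-1) := by ring
  rw [h2]
  field_simp
  ring

end AuxAnalysis

section AuxGraph

noncomputable def nxt (G : SimpleGraph V) [DecidableRel G.Adj] (a b : V) : V :=
  if h : ((G.neighborFinset b).erase a).Nonempty then h.choose else a

variable {G : SimpleGraph V} [DecidableRel G.Adj]

lemma nxt_spec {a b : V} (hb : G.degree b = 2) (hab : G.Adj b a) :
    G.Adj b (nxt G a b) ∧ nxt G a b ≠ a := by
  have ha : a ∈ G.neighborFinset b := by rwa [mem_neighborFinset]
  have hcard2 : (G.neighborFinset b).card = 2 := hb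
  have hcard : ((G.neighborFinset b).erase a).card = 1 := by
    rw [Finset.card_erase_of_mem ha, hcard2]
  have hne : ((G.neighborFinset b).erase a).Nonempty :=
    Finset.card_pos.mp (by omega)
  rw [nxt, dif_pos hne]
  have := hne.choose_spec
  rw [Finset.mem_erase, mem_neighborFinset] at this
  exact ⟨this.2, this.1⟩

lemma nxt_unique {a b c : V} (hb : G.degree b = 2) (hab : G.Adj b a)
    (hc : G.Adj b c) (hca : c ≠ a) : c = nxt G a b := by
  have ha : a ∈ G.neighborFinset b := by rwa [mem_neighborFinset]
  have hcard2 : (G.neighborFinset b).card = 2 := hb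
  have hcard : ((G.neighborFinset b).erase a).card = 1 := by
    rw [Finset.card_erase_of_mem ha, hcard2]
  have h1 : c ∈ (G.neighborFinset b).erase a := by
    rw [Finset.mem_erase, mem_neighborFinset]; exact ⟨hca, hc⟩
  obtain ⟨hadj, hne⟩ := nxt_spec hb hab
  have h2 : nxt G a b ∈ (G.neighborFinset b).erase a := by
    rw [Finset.mem_erase, mem_neighborFinset]; exact ⟨hne, hadj⟩
  exact Finset.card_le_one.mp (le_of_eq hcard) c h1 _ h2

noncomputable def cseq (G : SimpleGraph V) [DecidableRel G.Adj] (v0 v1 : V) : ℕ → V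
  | 0 => v0
  | 1 => v1
  | (k+2) => nxt G (cseq G v0 v1 k) (cseq G v0 v1 (k+1))

variable {v0 v1 : V}

lemma cseq_adj (hdeg : ∀ v, G.degree v = 2) (h01 : G.Adj v0 v1) (k : ℕ) :
    G.Adj (cseq G v0 v1 k) (cseq G v0 v1 (k+1)) := by
  induction k with
  | zero => exact h01
  | succ k ih =>
    have e : cseq G v0 v1 (k+2) = nxt G (cseq G v0 v1 k) (cseq G v0 v1 (k+1)) := by
      simp [cseq]
    rw [e]
    exact (nxt_spec (hdeg _) ih.symm).1

lemma cseq_ne (hdeg : ∀ v, G.degree v = 2) (h01 : G.Adj v0 v1) (k : ℕ) :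
    cseq G v0 v1 (k+2) ≠ cseq G v0 v1 k := by
  have e : cseq G v0 v1 (k+2) = nxt G (cseq G v0 v1 k) (cseq G v0 v1 (k+1)) := by
    simp [cseq]
  rw [e]
  exact (nxt_spec (hdeg _) (cseq_adj hdeg h01 k).symm).2

lemma cseq_prev (hdeg : ∀ v, G.degree v = 2) (h01 : G.Adj v0 v1) (k : ℕ) :
    nxt G (cseq G v0 v1 (k+2)) (cseq G v0 v1 (k+1)) = cseq G v0 v1 k :=
  (nxt_unique (hdeg _) (cseq_adj hdeg h01 (k+1)) (cseq_adj hdeg h01 k).symm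
    (cseq_ne hdeg h01 k).symm).symm

lemma cseq_nbrs (hdeg : ∀ v, G.degree v = 2) (h01 : G.Adj v0 v1) (I : ℕ) :
    G.neighborFinset (cseq G v0 v1 (I+1)) = {cseq G v0 v1 I, cseq G v0 v1 (I+2)} := by
  have hsub : ({cseq G v0 v1 I, cseq G v0 v1 (I+2)} : Finset V)
      ⊆ G.neighborFinset (cseq G v0 v1 (I+1)) := by
    intro c hc
    rw [Finset.mem_insert, Finset.mem_singleton] at hc
    rw [mem_neighborFinset]
    rcases hc with rfl | rfl
    · exact (cseq_adj hdeg h01 I).symm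
    · exact cseq_adj hdeg h01 (I+1)
  have hcard : ({cseq G v0 v1 I, cseq G v0 v1 (I+2)} : Finset V).card = 2 :=
    Finset.card_pair (cseq_ne hdeg h01 I).symm
  exact (Finset.eq_of_subset_of_card_le hsub (by rw [hcard]; exact le_of_eq (hdeg _))).symm

lemma pair_fwd (h1 : cseq G v0 v1 i = cseq G v0 v1 j)
    (h2 : cseq G v0 v1 (i+1) = cseq G v0 v1 (j+1)) (t : ℕ) :
    cseq G v0 v1 (i+t) = cseq G v0 v1 (j+t) ∧
      cseq G v0 v1 (i+t+1) = cseq G v0 v1 (j+t+1) := by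
  induction t with
  | zero => exact ⟨h1, h2⟩
  | succ t ih =>
    have e1 : cseq G v0 v1 (i+t+2) = nxt G (cseq G v0 v1 (i+t)) (cseq G v0 v1 (i+t+1)) := by
      simp [cseq]
    have e2 : cseq G v0 v1 (j+t+2) = nxt G (cseq G v0 v1 (j+t)) (cseq G v0 v1 (j+t+1)) := by
      simp [cseq]
    refine ⟨by rw [show i+(t+1) = i+t+1 from rfl, show j+(t+1) = j+t+1 from rfl]; exact ih.2, ?_⟩
    rw [show i+(t+1)+1 = i+t+2 from rfl, show j+(t+1)+1 = j+t+2 from rfl, e1, e2, ih.1, ih.2]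

theorem iso_cycle (hconn : G.Connected) (n : ℕ) (hcard : Fintype.card V = n)
    (hn3 : 3 ≤ n) (hdeg : ∀ v, G.degree v = 2) :
    Nonempty (G ≃g cycleGraph n) := by
  classical
  obtain ⟨m, rfl⟩ : ∃ m, n = m + 3 := ⟨n - 3, by omega⟩
  have hVne : Nonempty V := Fintype.card_pos_iff.mp (by omega)
  obtain ⟨v0⟩ := hVne
  have hd0 : 0 < G.degree v0 := by rw [hdeg v0]; omega
  obtain ⟨v1, h01⟩ := G.degree_pos_iff_exists_adj v0 |>.mp hd0
  obtain ⟨c, hcseq⟩ : ∃ c : ℕ → V, c = cseq G v0 v1 := ⟨_, rfl⟩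
  have hc0 : c 0 = v0 := by rw [hcseq]; simp [cseq]
  have hadjc : ∀ k, G.Adj (c k) (c (k+1)) := by rw [hcseq]; exact cseq_adj hdeg h01
  have hnec : ∀ k, c (k+2) ≠ c k := by rw [hcseq]; exact cseq_ne hdeg h01
  have hnbrsc : ∀ I, G.neighborFinset (c (I+1)) = {c I, c (I+2)} := by
    rw [hcseq]; exact cseq_nbrs hdeg h01
  have hpairf : ∀ i j : ℕ, c i = c j → c (i+1) = c (j+1) →
      ∀ t, c (i+t) = c (j+t) := by
    rw [hcseq]
    intro i j h1 h2 t
    exact (pair_fwd h1 h2 t).1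
  clear hcseq hd0
  have hex : ∃ j, 0 < j ∧ ∃ i, i < j ∧ c i = c j := by
    have hlt : Fintype.card V < Fintype.card (Fin (m + 4)) := by
      simp [hcard]
    obtain ⟨a, b, hab, heq⟩ :=
      Fintype.exists_ne_map_eq_of_card_lt (fun x : Fin (m + 4) => c x.val) hlt
    rcases lt_or_gt_of_ne (fun h : a.val = b.val => hab (Fin.ext h)) with h | h
    · exact ⟨b.val, by omega, a.val, h, heq⟩
    · exact ⟨a.val, by omega, b.val, h, heq.symm⟩
  obtain ⟨j, ⟨hj0, i, hij, hceq⟩, hminp⟩ :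
      ∃ j, (0 < j ∧ ∃ i, i < j ∧ c i = c j) ∧
        ∀ b, b < j → ¬(0 < b ∧ ∃ i, i < b ∧ c i = c b) :=
    ⟨Nat.find hex, Nat.find_spec hex, fun b hb => Nat.find_min hex hb⟩
  have hinj : ∀ a b, a < j → b < j → c a = c b → a = b := by
    intro a b ha hb heq
    rcases Nat.lt_trichotomy a b with h | h | h
    · exact absurd ⟨by omega, a, h, heq⟩ (hminp b hb)
    · exact h
    · exact absurd ⟨by omega, b, h, heq.symm⟩ (hminp a ha)
  have hj1 : j ≠ 1 := by
    intro h
    have hi : i = 0 := by omega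
    rw [hi, h] at hceq
    exact G.ne_of_adj (hadjc 0) hceq
  have hj2 : j ≠ 2 := by
    intro h
    have hi2 : i < 2 := by omega
    interval_cases i
    · rw [h] at hceq; exact hnec 0 hceq.symm
    · rw [h] at hceq; exact G.ne_of_adj (hadjc 1) hceq
  have hj3 : 3 ≤ j := by omega
  have hi0 : i = 0 := by
    by_contra hi
    obtain ⟨i', rfl⟩ : ∃ i', i = i' + 1 := ⟨i - 1, by omega⟩
    obtain ⟨j', rfl⟩ : ∃ j', j = j' + 1 := ⟨j - 1, by omega⟩
    have hij1 : i' + 2 < j' + 1 := by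
      rcases Nat.lt_or_ge (i' + 2) (j' + 1) with h | h
      · exact h
      · have he : i' + 2 = j' + 1 := by omega
        have hadj : G.Adj (c (i' + 1)) (c (i' + 2)) := hadjc (i' + 1)
        rw [he, ← hceq] at hadj
        exact absurd rfl (G.ne_of_adj hadj)
    have hjmem : c j' ∈ G.neighborFinset (c (i' + 1)) := by
      rw [mem_neighborFinset, hceq]
      exact (hadjc j').symm
    rw [hnbrsc i', Finset.mem_insert, Finset.mem_singleton] at hjmem
    rcases hjmem with h | h
    · have := hinj j' i' (by omega) (by omega) h
      omega
    · have hj'' := hinj j' (i' + 2) (by omega) (by omega) h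
      rw [hj''] at hceq
      exact hnec (i' + 1) (by rw [show i'+1+2 = i'+2+1 from by omega]; exact hceq.symm)
  rw [hi0] at hceq
  have hnbr0 : G.neighborFinset (c 0) = {c 1, c (j - 1)} := by
    obtain ⟨p, hp⟩ : ∃ p, j = p + 1 := ⟨j - 1, by omega⟩
    have h1 : c 1 ∈ G.neighborFinset (c 0) := by
      rw [mem_neighborFinset]; exact hadjc 0
    have h2 : c (j - 1) ∈ G.neighborFinset (c 0) := by
      rw [mem_neighborFinset, show j - 1 = p from by omega]
      have hx := hadjc p
      rw [← hp, ← hceq] at hx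
      exact hx.symm
    have hne12 : c 1 ≠ c (j - 1) := by
      intro h
      have := hinj 1 (j - 1) (by omega) (by omega) h
      omega
    have hsub : ({c 1, c (j - 1)} : Finset V) ⊆ G.neighborFinset (c 0) := by
      intro x hx
      rw [Finset.mem_insert, Finset.mem_singleton] at hx
      rcases hx with rfl | rfl
      · exact h1
      · exact h2
    exact (Finset.eq_of_subset_of_card_le hsub
      (by rw [Finset.card_pair hne12]; exact le_of_eq (hdeg _))).symm
  have hceq1 : c (j + 1) = c 1 := by
    have hmem : c (j + 1) ∈ G.neighborFinset (c 0) := by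
      rw [mem_neighborFinset, hceq]
      exact hadjc j
    rw [hnbr0, Finset.mem_insert, Finset.mem_singleton] at hmem
    rcases hmem with h | h
    · exact h
    · exfalso
      obtain ⟨p, hp⟩ : ∃ p, j = p + 1 := ⟨j - 1, by omega⟩
      rw [show j - 1 = p from by omega, show j + 1 = p + 2 from by omega] at h
      exact hnec p h
  have hper : ∀ t, c (t + j) = c t := by
    intro t
    have hx := hpairf 0 j hceq hceq1.symm t
    rw [Nat.zero_add] at hx
    rw [Nat.add_comm]
    exact hx.symm
  have hmul : ∀ mm t, c t = c (t + mm * j) := by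
    intro mm
    induction mm with
    | zero => intro t; simp
    | succ mm ih =>
      intro t
      have h1 := ih t
      have h2 := hper (t + mm * j)
      rw [h1, ← h2]
      congr 1
      ring
  have hmod : ∀ t, c t = c (t % j) := by
    intro t
    have e : t = t % j + (t / j) * j := by
      rw [Nat.mul_comm]
      exact (Nat.mod_add_div t j).symm
    conv_lhs => rw [e]
    exact (hmul (t / j) (t % j)).symm
  have hinj_mod : ∀ a b, c a = c b → a % j = b % j := by
    intro a b h
    apply hinj _ _ (Nat.mod_lt _ (by omega)) (Nat.mod_lt _ (by omega))
    rw [← hmod, ← hmod, h]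
  have hkey : ∀ (u w : V) (p : G.Walk u w), (∃ t, c t = u) → ∃ t, c t = w := by
    intro u w p
    induction p with
    | nil => exact id
    | @cons u x w hux p ih =>
      rintro ⟨t, ht⟩
      apply ih
      have hmem : x ∈ G.neighborFinset (c (t + j)) := by
        rw [mem_neighborFinset, hper t, ht]
        exact hux
      rw [show t + j = (t + j - 1) + 1 from by omega, hnbrsc,
        Finset.mem_insert, Finset.mem_singleton] at hmem
      rcases hmem with h | h
      · exact ⟨t + j - 1, h.symm⟩
      · exact ⟨t + j - 1 + 2, h.symm⟩
  have hreach : ∀ v : V, ∃ t, t < j ∧ c t = v := by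
    intro v
    obtain ⟨p⟩ := hconn.preconnected v0 v
    obtain ⟨t, ht⟩ := hkey v0 v p ⟨0, hc0⟩
    exact ⟨t % j, Nat.mod_lt _ (by omega), by rw [← hmod]; exact ht⟩
  have hjn : j = m + 3 := by
    have h1 : j ≤ m + 3 := by
      have hcardimg : ((Finset.range j).image c).card = j := by
        rw [Finset.card_image_of_injOn, Finset.card_range]
        intro a ha b hb h
        simp only [Finset.coe_range, Set.mem_Iio] at ha hb
        exact hinj a b ha hb h
      calc j = ((Finset.range j).image c).card := hcardimg.symm
        _ ≤ (Finset.univ : Finset V).card := Finset.card_le_card (Finset.subset_univ _)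
        _ = m + 3 := by rw [Finset.card_univ, hcard]
    have h2 : m + 3 ≤ j := by
      have hsub : (Finset.univ : Finset V) ⊆ (Finset.range j).image c := by
        intro v _
        obtain ⟨t, ht, hv⟩ := hreach v
        exact Finset.mem_image.mpr ⟨t, Finset.mem_range.mpr ht, hv⟩
      calc m + 3 = (Finset.univ : Finset V).card := by rw [Finset.card_univ, hcard]
        _ ≤ ((Finset.range j).image c).card := Finset.card_le_card hsub
        _ ≤ (Finset.range j).card := Finset.card_image_le
        _ = j := Finset.card_range _
    omega
  have hmodn : ∀ t, c (t % (m + 3)) = c t := by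
    intro t
    rw [← hjn]
    exact (hmod t).symm
  have hphi_inj : Function.Injective (fun a : Fin (m + 3) => c a.val) := by
    intro a b h
    apply Fin.ext
    have hx := hinj_mod a.val b.val h
    rwa [Nat.mod_eq_of_lt (by omega : a.val < j), Nat.mod_eq_of_lt (by omega : b.val < j)] at hx
  have hphi_bij : Function.Bijective (fun a : Fin (m + 3) => c a.val) := by
    rw [Fintype.bijective_iff_injective_and_card]
    exact ⟨hphi_inj, by simp [hcard]⟩
  have hval1 : ((1 : Fin (m + 3))).val = 1 := rfl
  have hadj_iff : ∀ a b : Fin (m + 3),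
      G.Adj (c a.val) (c b.val) ↔ (cycleGraph (m + 3)).Adj a b := by
    intro a b
    rw [cycleGraph_adj]
    constructor
    · intro hadj
      have hmem : c b.val ∈ G.neighborFinset (c (a.val + j)) := by
        rw [mem_neighborFinset, hper]
        exact hadj
      rw [show a.val + j = (a.val + j - 1) + 1 from by omega, hnbrsc,
        Finset.mem_insert, Finset.mem_singleton] at hmem
      rcases hmem with h | h
      · -- b = a - 1, so a = b + 1
        left
        have hm := hinj_mod _ _ h
        rw [Nat.mod_eq_of_lt (by omega : b.val < j), hjn] at hm
        have hav : (b.val + 1) % (m + 3) = a.val := by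
          rw [hm, Nat.mod_add_mod,
            show a.val + (m + 3) - 1 + 1 = a.val + (m + 3) from by omega,
            Nat.add_mod_right, Nat.mod_eq_of_lt a.isLt]
        have hab : a = b + 1 := by
          apply Fin.ext
          rw [Fin.val_add, hval1, hav]
        rw [hab, add_sub_cancel_left]
      · -- b = a + 1
        right
        have hm := hinj_mod _ _ h
        rw [Nat.mod_eq_of_lt (by omega : b.val < j), hjn] at hm
        have hbv : b.val = (a.val + 1) % (m + 3) := by
          rw [hm, show a.val + (m + 3) - 1 + 2 = a.val + 1 + (m + 3) from by omega,
            Nat.add_mod_right]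
        have hab : b = a + 1 := by
          apply Fin.ext
          rw [Fin.val_add, hval1, hbv]
        rw [hab, add_sub_cancel_left]
    · intro hadj
      rcases hadj with h | h
      · -- a - b = 1, so a = b + 1
        have hab : a = b + 1 := by rw [← h]; abel
        have hav : a.val = (b.val + 1) % (m + 3) := by
          rw [hab, Fin.val_add, hval1]
        rw [hav, hmodn]
        exact (hadjc b.val).symm
      · -- b = a + 1
        have hab : b = a + 1 := by rw [← h]; abel
        have hbv : b.val = (a.val + 1) % (m + 3) := by
          rw [hab, Fin.val_add, hval1]
        rw [hbv, hmodn]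
        exact hadjc a.val
  exact ⟨(SimpleGraph.Iso.symm ⟨Equiv.ofBijective _ hphi_bij, fun {a b} => hadj_iff a b⟩)⟩

lemma iso_degree {W : Type*} [Fintype W] {G : SimpleGraph V} [DecidableRel G.Adj]
    {G' : SimpleGraph W} [DecidableRel G'.Adj] (f : G ≃g G') (v : V) :
    G'.degree (f v) = G.degree v := by
  rw [← card_neighborSet_eq_degree, ← card_neighborSet_eq_degree]
  exact Fintype.card_congr (f.mapNeighborSet v).symm

lemma cycle_degree_two {G : SimpleGraph V} [DecidableRel G.Adj] {n : ℕ} (hn : 3 ≤ n)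
    (f : G ≃g cycleGraph n) (v : V) : G.degree v = 2 := by
  obtain ⟨m, rfl⟩ : ∃ m, n = m + 3 := ⟨n - 3, by omega⟩
  rw [← iso_degree f v]
  exact cycleGraph_degree_three_le

lemma complete_degree' {G : SimpleGraph V} [DecidableRel G.Adj] {n : ℕ}
    (f : G ≃g completeGraph (Fin n)) (v : V) : G.degree v = n - 1 := by
  haveI : DecidableRel (completeGraph (Fin n)).Adj :=
    fun a b => inferInstanceAs (Decidable (a ≠ b))
  rw [← iso_degree f v]
  have hnb : (completeGraph (Fin n)).neighborFinset (f v) = Finset.univ.erase (f v) := by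
    ext x
    rw [mem_neighborFinset, Finset.mem_erase]
    constructor
    · intro h
      exact ⟨Ne.symm h, Finset.mem_univ x⟩
    · intro h
      exact Ne.symm h.1
  rw [SimpleGraph.degree, hnb, Finset.card_erase_of_mem (Finset.mem_univ _),
    Finset.card_univ, Fintype.card_fin]

lemma eq_top_of_degrees {G : SimpleGraph V} [DecidableRel G.Adj]
    (h : ∀ v, G.degree v = Fintype.card V - 1) : G = ⊤ := by
  ext v w
  simp only [top_adj]
  constructor
  · exact G.ne_of_adj
  · intro hvw
    have hsub : G.neighborFinset v ⊆ Finset.univ.erase v := by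
      intro x hx
      rw [Finset.mem_erase]
      rw [mem_neighborFinset] at hx
      exact ⟨(G.ne_of_adj hx).symm, Finset.mem_univ x⟩
    have hcards : (Finset.univ.erase v).card ≤ (G.neighborFinset v).card := by
      rw [Finset.card_erase_of_mem (Finset.mem_univ v), Finset.card_univ]
      have : (G.neighborFinset v).card = G.degree v := rfl
      rw [this, h v]
    have heq := Finset.eq_of_subset_of_card_le hsub hcards
    have hw : w ∈ G.neighborFinset v := by
      rw [heq, Finset.mem_erase]
      exact ⟨hvw.symm, Finset.mem_univ w⟩
    rwa [mem_neighborFinset] at hw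

lemma iso_complete_of_degrees {G : SimpleGraph V} [DecidableRel G.Adj] {n : ℕ}
    (hcard : Fintype.card V = n) (h : ∀ v, G.degree v = n - 1) :
    Nonempty (G ≃g completeGraph (Fin n)) := by
  have htop : G = ⊤ := eq_top_of_degrees (fun v => by rw [h v, hcard])
  have e : V ≃ Fin n := Fintype.equivFinOfCardEq hcard
  refine ⟨⟨e, ?_⟩⟩
  intro a b
  rw [htop, top_adj]
  constructor
  · intro hne hab
    exact hne (by rw [hab])
  · intro hne hab
    exact hne (e.injective hab)

end AuxGraph

variable (G : SimpleGraph V) [DecidableRel G.Adj]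

theorem stmt19 (hG : G.Connected) (n : ℕ) (hn : Fintype.card V = n) (hn3 : 3 ≤ n)
    (hδ : 2 ≤ G.minDegree) :
    8 * geoArithIndex G ≤ augZagrebIndex G ∧
    augZagrebIndex G ≤ ((n : ℝ) - 1) ^ 6 / (8 * ((n : ℝ) - 2) ^ 3) * geoArithIndex G ∧
    (8 * geoArithIndex G = augZagrebIndex G ↔ Nonempty (G ≃g cycleGraph n)) ∧
    (augZagrebIndex G = ((n : ℝ) - 1) ^ 6 / (8 * ((n : ℝ) - 2) ^ 3) * geoArithIndex G ↔
      Nonempty (G ≃g completeGraph (Fin n))) := by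
  classical
  have hn1 : (3:ℝ) ≤ (n:ℝ) := by exact_mod_cast hn3
  have hM2 : (2:ℝ) ≤ (n:ℝ) - 1 := by linarith
  set C : ℝ := ((n:ℝ) - 1) ^ 6 / (8 * ((n:ℝ) - 2) ^ 3) with hCdef
  have hC0 : (0:ℝ) < C := by
    rw [hCdef]
    apply div_pos (pow_pos (by linarith) 6)
    exact mul_pos (by norm_num) (pow_pos (by linarith) 3)
  have hCeq : 4 * C^2 = Ffun ((n:ℝ)-1) ((n:ℝ)-1) := by
    rw [Ffun_MM _ hM2, hCdef]
    ring
  have hdlo : ∀ v : V, (2:ℝ) ≤ (G.degree v : ℝ) := by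
    intro v
    have h1 : 2 ≤ G.degree v := le_trans hδ (G.minDegree_le_degree v)
    exact_mod_cast h1
  have hdhi : ∀ v : V, (G.degree v : ℝ) ≤ (n:ℝ) - 1 := by
    intro v
    have h1 : G.degree v < n := hn ▸ G.degree_lt_card_verts v
    have h2 : (G.degree v : ℝ) + 1 ≤ (n:ℝ) := by exact_mod_cast Nat.succ_le_of_lt h1
    linarith
  have h22 : Ffun 2 2 = 4 * 8^2 := by norm_num [Ffun]
  have hcastn : ((n - 1 : ℕ) : ℝ) = (n:ℝ) - 1 := by
    have h1 : 1 ≤ n := by omega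
    push_cast [h1]
    ring
  obtain ⟨ga, hga, hgaE⟩ : ∃ ga : Sym2 V → ℝ,
      (∀ u v : V, ga s(u, v) = 2 * Real.sqrt ((G.degree u : ℝ) * (G.degree v : ℝ)) /
        ((G.degree u : ℝ) + (G.degree v : ℝ))) ∧
      geoArithIndex G = ∑ e ∈ G.edgeFinset, ga e :=
    ⟨Sym2.lift ⟨fun u v => 2 * Real.sqrt ((G.degree u : ℝ) * (G.degree v : ℝ)) /
        ((G.degree u : ℝ) + (G.degree v : ℝ)),
     fun u v => by dsimp only; rw [mul_comm ((G.degree u : ℝ)) ((G.degree v : ℝ)),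
        add_comm ((G.degree u : ℝ)) ((G.degree v : ℝ))]⟩, fun u v => rfl, rfl⟩
  obtain ⟨az, haz, hazE⟩ : ∃ az : Sym2 V → ℝ,
      (∀ u v : V, az s(u, v) = ((G.degree u : ℝ) * (G.degree v : ℝ) /
        ((G.degree u : ℝ) + (G.degree v : ℝ) - 2)) ^ 3) ∧
      augZagrebIndex G = ∑ e ∈ G.edgeFinset, az e :=
    ⟨Sym2.lift ⟨fun u v => ((G.degree u : ℝ) * (G.degree v : ℝ) /
        ((G.degree u : ℝ) + (G.degree v : ℝ) - 2)) ^ 3,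
     fun u v => by dsimp only; rw [mul_comm ((G.degree u : ℝ)) ((G.degree v : ℝ)),
        add_comm ((G.degree u : ℝ)) ((G.degree v : ℝ))]⟩, fun u v => rfl, rfl⟩
  rw [hgaE, hazE]
  have hle1 : ∀ e : Sym2 V, 8 * ga e ≤ az e := by
    intro e
    induction e using Sym2.ind with
    | _ u v =>
      rw [hga, haz]
      refine (master _ _ 8 (hdlo u) (hdlo v) (by norm_num)).2.mpr ?_
      rw [← h22]
      exact Ffun_le_Ffun le_rfl le_rfl (hdlo u) (hdlo v)
  have hle2 : ∀ e : Sym2 V, az e ≤ C * ga e := by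
    intro e
    induction e using Sym2.ind with
    | _ u v =>
      rw [hga, haz]
      refine (master _ _ C (hdlo u) (hdlo v) hC0).1.mpr ?_
      rw [hCeq]
      exact Ffun_le_Ffun (hdlo u) (hdlo v) (hdhi u) (hdhi v)
  refine ⟨?_, ?_, ?_, ?_⟩
  · rw [Finset.mul_sum]
    exact Finset.sum_le_sum (fun e _ => hle1 e)
  · rw [Finset.mul_sum]
    exact Finset.sum_le_sum (fun e _ => hle2 e)
  · constructor
    · intro heq
      rw [Finset.mul_sum] at heq
      have hall := (Finset.sum_eq_sum_iff_of_le (fun e _ => hle1 e)).mp heq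
      have hdeg2 : ∀ v, G.degree v = 2 := by
        intro v
        have hdv : 0 < G.degree v :=
          lt_of_lt_of_le (by norm_num) (le_trans hδ (G.minDegree_le_degree v))
        obtain ⟨u, hu⟩ := (G.degree_pos_iff_exists_adj v).mp hdv
        have hmem : s(v, u) ∈ G.edgeFinset := by
          rw [mem_edgeFinset, mem_edgeSet]; exact hu
        have h := hall _ hmem
        rw [hga, haz] at h
        have hF := (master_eq _ _ 8 (hdlo v) (hdlo u) (by norm_num)).mp h.symm
        by_contra hne
        have hne' : (G.degree v : ℝ) ≠ 2 := fun hc => hne (by exact_mod_cast hc)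
        have h2 : (2:ℝ) < (G.degree v : ℝ) := lt_of_le_of_ne (hdlo v) (Ne.symm hne')
        have hlt := Ffun_lt_Ffun le_rfl le_rfl (hdlo v) (hdlo u) (Or.inl h2)
        linarith
      exact iso_cycle hG n hn hn3 hdeg2
    · rintro ⟨f⟩
      have hdeg2 := cycle_degree_two hn3 f
      rw [Finset.mul_sum]
      refine Finset.sum_congr rfl (fun e _ => ?_)
      induction e using Sym2.ind with
      | _ u v =>
        rw [hga, haz, hdeg2 u, hdeg2 v, show ((2:ℕ):ℝ) = (2:ℝ) from by norm_num]
        exact ((master_eq 2 2 8 le_rfl le_rfl (by norm_num)).mpr h22).symm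
  · constructor
    · intro heq
      rw [Finset.mul_sum] at heq
      have hall := (Finset.sum_eq_sum_iff_of_le (fun e _ => hle2 e)).mp heq
      have hdegM : ∀ v, G.degree v = n - 1 := by
        intro v
        have hdv : 0 < G.degree v :=
          lt_of_lt_of_le (by norm_num) (le_trans hδ (G.minDegree_le_degree v))
        obtain ⟨u, hu⟩ := (G.degree_pos_iff_exists_adj v).mp hdv
        have hmem : s(v, u) ∈ G.edgeFinset := by
          rw [mem_edgeFinset, mem_edgeSet]; exact hu
        have h := hall _ hmem
        rw [hga, haz] at h
        have hF := (master_eq _ _ C (hdlo v) (hdlo u) hC0).mp h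
        by_contra hne
        have hne' : (G.degree v : ℝ) ≠ (n:ℝ) - 1 := by
          rw [← hcastn]
          exact_mod_cast hne
        have h2 : (G.degree v : ℝ) < (n:ℝ) - 1 := lt_of_le_of_ne (hdhi v) hne'
        have hlt := Ffun_lt_Ffun (hdlo v) (hdlo u) (hdhi v) (hdhi u) (Or.inl h2)
        rw [← hCeq] at hlt
        linarith
      exact iso_complete_of_degrees hn hdegM
    · rintro ⟨f⟩
      have hdegM := complete_degree' f
      rw [Finset.mul_sum]
      refine Finset.sum_congr rfl (fun e _ => ?_)
      induction e using Sym2.ind with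
      | _ u v =>
        rw [hga, haz, hdegM u, hdegM v, hcastn]
        exact (master_eq _ _ C hM2 hM2 hC0).mpr hCeq.symm
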